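/- For every q ∈ ℂ with |q| < 1 and every x ∈ ℂ, Euler's identity holds: ∏_{n≥0}(1 - x q^n) = ∑_{n≥0} (-1)^n · q^{n(n-1)/2} · x^n / ∏_{k=1}^n (1 - q^k), the series on the right converging absolutely. -/

import Mathlib

open Finset Filter Complex Topology

noncomputable def eulerD (q : ℂ) (n : ℕ) : ℂ := ∏ k ∈ Finset.range n, (1 - q ^ (k + 1))
noncomputable def eulerT (q : ℂ) (N n : ℕ) : ℂ := ∏ j ∈ Finset.range n, (1 - q ^ (N - j))
noncomputable def eulerC (q : ℂ) (n : ℕ) : ℂ := (-1) ^ n * q ^ (n * (n - 1) / 2)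

lemma euler_exp_succ (n : ℕ) : (n + 1) * n / 2 = n * (n - 1) / 2 + n := by
  cases n with
  | zero => rfl
  | succ m =>
    obtain ⟨k, hk⟩ := Nat.even_mul_succ_self m
    have h1 : (m + 1 + 1) * (m + 1) = m * (m + 1) + 2 * (m + 1) := by ring
    have h2 : (m + 1) * (m + 1 - 1) = m * (m + 1) := by simp; ring
    rw [h1, h2, hk]
    omega

lemma eulerC_succ (q : ℂ) (n : ℕ) : eulerC q (n + 1) = -eulerC q n * q ^ n := by
  simp only [eulerC]
  rw [show (n + 1) * (n + 1 - 1) / 2 = n * (n - 1) / 2 + n by simpa using euler_exp_succ n]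
  rw [pow_add, pow_succ]
  ring

lemma eulerD_norm (q : ℂ) (hq : ‖q‖ < 1) (n : ℕ) :
    (1 - ‖q‖) ^ n ≤ ‖eulerD q n‖ := by
  have h0 : (0:ℝ) ≤ ‖q‖ := norm_nonneg q
  rw [eulerD, norm_prod]
  calc (1 - ‖q‖) ^ n = ∏ k ∈ range n, (1 - ‖q‖) := by
        rw [prod_const, card_range]
    _ ≤ ∏ k ∈ range n, ‖1 - q ^ (k + 1)‖ := by
        apply Finset.prod_le_prod
        · intro i _; linarith
        · intro i _
          have h1 : ‖q‖ ^ (i + 1) ≤ ‖q‖ ^ 1 :=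
            pow_le_pow_of_le_one h0 hq.le (by omega)
          have h1' : ‖q‖ ^ 1 = ‖q‖ := pow_one _
          calc 1 - ‖q‖ ≤ 1 - ‖q‖ ^ (i+1) := by rw [h1'] at h1; linarith
            _ ≤ ‖(1:ℂ) - q ^ (i+1)‖ := by
                have h2 := norm_sub_norm_le (1:ℂ) (q ^ (i+1))
                rw [norm_one, norm_pow] at h2
                linarith

lemma eulerD_ne_zero (q : ℂ) (hq : ‖q‖ < 1) (n : ℕ) : eulerD q n ≠ 0 := by
  have h := eulerD_norm q hq n
  have : (0:ℝ) < (1 - ‖q‖) ^ n := pow_pos (by linarith) n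
  intro h0
  rw [h0] at h
  simp at h
  linarith

lemma euler_qbinom (q x : ℂ) (hq : ‖q‖ < 1) (N : ℕ) :
    ∏ k ∈ Finset.range N, (1 - x * q ^ k) =
      ∑ n ∈ Finset.range (N + 1), eulerC q n * x ^ n * eulerT q N n / eulerD q n := by
  induction N with
  | zero => simp [eulerC, eulerT, eulerD]
  | succ N IH =>
    have hone : ∀ m : ℕ, (1:ℂ) - q ^ (m+1) ≠ 0 := by
      intro m h
      have : ‖q ^ (m+1)‖ < 1 := by
        rw [norm_pow]; exact pow_lt_one₀ (norm_nonneg q) hq (by omega)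
      have h2 : q ^ (m+1) = 1 := by linear_combination -h
      rw [h2] at this; simp at this
    -- key Pascal identity
    have key : ∀ m : ℕ, m ≤ N → eulerT q (N+1) (m+1)
        = eulerT q N (m+1) + q ^ (N - m) * (1 - q ^ (m+1)) * eulerT q N m := by
      intro m hm
      have h1 : eulerT q (N+1) (m+1) = eulerT q N m * (1 - q ^ (N+1)) := by
        rw [eulerT, eulerT, Finset.prod_range_succ', Nat.sub_zero]
        congr 1
        apply Finset.prod_congr rfl
        intro j _
        congr 2
        omega
      have h2 : eulerT q N (m+1) = eulerT q N m * (1 - q ^ (N - m)) :=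
        Finset.prod_range_succ _ _
      have h3 : q ^ (N - m) * q ^ (m+1) = q ^ (N+1) := by
        rw [← pow_add]; congr 1; omega
      rw [h1, h2]
      linear_combination (eulerT q N m) * h3
    have hsplit : ∀ i ∈ Finset.range (N+1),
        eulerC q (i+1) * x ^ (i+1) * eulerT q (N+1) (i+1) / eulerD q (i+1)
        = eulerC q (i+1) * x ^ (i+1) * eulerT q N (i+1) / eulerD q (i+1)
          - x * q ^ N * (eulerC q i * x ^ i * eulerT q N i / eulerD q i) := by
      intro i hi
      have him : i ≤ N := by
        have := Finset.mem_range.mp hi; omega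
      have hD : eulerD q (i+1) = eulerD q i * (1 - q ^ (i+1)) := Finset.prod_range_succ _ _
      have hDne : eulerD q i ≠ 0 := eulerD_ne_zero q hq i
      have hne : (1:ℂ) - q ^ (i+1) ≠ 0 := hone i
      have hqN : q ^ i * q ^ (N - i) = q ^ N := by rw [← pow_add]; congr 1; omega
      rw [key i him, hD, eulerC_succ, ← hqN]
      field_simp
      ring
    have hT0 : eulerT q N (N+1) = 0 := by
      rw [eulerT]
      apply Finset.prod_eq_zero (Finset.self_mem_range_succ N)
      simp
    calc ∏ k ∈ Finset.range (N+1), (1 - x * q ^ k)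
        = (∑ n ∈ Finset.range (N + 1), eulerC q n * x ^ n * eulerT q N n / eulerD q n)
            * (1 - x * q ^ N) := by rw [Finset.prod_range_succ, IH]
      _ = ∑ n ∈ Finset.range (N + 2), eulerC q n * x ^ n * eulerT q (N+1) n / eulerD q n := by
          rw [Finset.sum_range_succ' (fun n => eulerC q n * x ^ n * eulerT q (N+1) n / eulerD q n) (N+1)]
          rw [Finset.sum_congr rfl hsplit]
          rw [Finset.sum_sub_distrib]
          rw [show (∑ i ∈ Finset.range (N+1),
                eulerC q (i+1) * x ^ (i+1) * eulerT q N (i+1) / eulerD q (i+1))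
              = (∑ n ∈ Finset.range (N+2), eulerC q n * x ^ n * eulerT q N n / eulerD q n)
                - eulerC q 0 * x ^ 0 * eulerT q N 0 / eulerD q 0 by
            rw [Finset.sum_range_succ' (fun n => eulerC q n * x ^ n * eulerT q N n / eulerD q n) (N+1)]
            ring]
          rw [Finset.sum_range_succ (fun n => eulerC q n * x ^ n * eulerT q N n / eulerD q n) (N+1)]
          rw [hT0, ← Finset.mul_sum]
          simp [eulerC, eulerT, eulerD]
          ring
open Finset Filter Complex Topology

noncomputable def eulerB (q x : ℂ) (n : ℕ) : ℝ :=
  ‖q‖ ^ (n * (n - 1) / 2) * (2 * ‖x‖ / (1 - ‖q‖)) ^ n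

lemma eulerB_nonneg (q x : ℂ) (hq : ‖q‖ < 1) (n : ℕ) : 0 ≤ eulerB q x n := by
  have h1 : (0:ℝ) < 1 - ‖q‖ := by linarith
  have := norm_nonneg q
  have := norm_nonneg x
  apply mul_nonneg (pow_nonneg (norm_nonneg q) _)
  positivity

lemma eulerB_summable (q x : ℂ) (hq : ‖q‖ < 1) : Summable (eulerB q x) := by
  set K : ℝ := 2 * ‖x‖ / (1 - ‖q‖) with hK
  have hr0 : (0:ℝ) ≤ ‖q‖ := norm_nonneg q
  have hr1 : (0:ℝ) < 1 - ‖q‖ := by linarith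
  have hK0 : 0 ≤ K := by positivity
  have hsucc : ∀ n : ℕ, eulerB q x (n+1) = (K * ‖q‖ ^ n) * eulerB q x n := by
    intro n
    simp only [eulerB, ← hK]
    rw [show (n + 1) * (n + 1 - 1) / 2 = n * (n - 1) / 2 + n by simpa using euler_exp_succ n]
    rw [pow_add, pow_succ]
    ring
  have hlim : Tendsto (fun n : ℕ => K * ‖q‖ ^ n) atTop (𝓝 0) := by
    have h := tendsto_pow_atTop_nhds_zero_of_norm_lt_one
      (show ‖‖q‖‖ < 1 by rwa [Real.norm_eq_abs, _root_.abs_of_nonneg hr0])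
    simpa using h.const_mul K
  apply summable_of_ratio_norm_eventually_le (show (1:ℝ)/2 < 1 by norm_num)
  filter_upwards [hlim.eventually_le_const (show (0:ℝ) < 1/2 by norm_num)] with n hn
  rw [Real.norm_eq_abs, Real.norm_eq_abs, _root_.abs_of_nonneg (eulerB_nonneg q x hq _),
    _root_.abs_of_nonneg (eulerB_nonneg q x hq _), hsucc n]
  exact mul_le_mul_of_nonneg_right hn (eulerB_nonneg q x hq n)

lemma eulerB_bound (q x : ℂ) (hq : ‖q‖ < 1) (z : ℂ) (n : ℕ) (hz : ‖z‖ ≤ 2 ^ n) :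
    ‖eulerC q n * x ^ n * z / eulerD q n‖ ≤ eulerB q x n := by
  have hr0 : (0:ℝ) ≤ ‖q‖ := norm_nonneg q
  have hr1 : (0:ℝ) < 1 - ‖q‖ := by linarith
  have hC : ‖eulerC q n‖ = ‖q‖ ^ (n * (n - 1) / 2) := by
    simp [eulerC, map_mul, map_pow]
  have hDn := eulerD_norm q hq n
  have hpos : (0:ℝ) < (1 - ‖q‖) ^ n := pow_pos hr1 n
  rw [norm_div, norm_mul, norm_mul, norm_pow, hC]
  calc ‖q‖ ^ (n * (n - 1) / 2) * ‖x‖ ^ n * ‖z‖ / ‖eulerD q n‖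
      ≤ ‖q‖ ^ (n * (n - 1) / 2) * ‖x‖ ^ n * 2 ^ n / (1 - ‖q‖) ^ n := by
        apply div_le_div₀ (by positivity) ?_ hpos hDn
        exact mul_le_mul_of_nonneg_left hz (by positivity)
    _ = eulerB q x n := by
        rw [eulerB, div_pow, mul_pow]
        field_simp
noncomputable def eulerF (q x : ℂ) (N n : ℕ) : ℂ :=
  if n ≤ N then eulerC q n * x ^ n * eulerT q N n / eulerD q n else 0

noncomputable def eulerG (q x : ℂ) (n : ℕ) : ℂ := eulerC q n * x ^ n / eulerD q n

lemma eulerT_norm (q : ℂ) (hq : ‖q‖ < 1) (N n : ℕ) : ‖eulerT q N n‖ ≤ 2 ^ n := by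
  rw [eulerT, norm_prod]
  calc ∏ j ∈ Finset.range n, ‖(1:ℂ) - q ^ (N - j)‖
      ≤ ∏ j ∈ Finset.range n, (2:ℝ) := by
        apply Finset.prod_le_prod (fun i _ => norm_nonneg _)
        intro i _
        calc ‖(1:ℂ) - q ^ (N - i)‖ ≤ ‖(1:ℂ)‖ + ‖q ^ (N - i)‖ := norm_sub_le _ _
          _ ≤ 1 + 1 := by
              rw [norm_one]
              gcongr
              rw [norm_pow]
              exact pow_le_one₀ (norm_nonneg q) hq.le
          _ = 2 := by norm_num
    _ = 2 ^ n := by rw [Finset.prod_const, Finset.card_range]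

lemma euler_multipliable (q x : ℂ) (hq : ‖q‖ < 1) :
    Multipliable (fun n : ℕ => 1 - x * q ^ n) := by
  by_cases hzero : ∀ m : ℕ, (1:ℂ) - x * q ^ m ≠ 0
  · have hlog : Summable (fun n : ℕ => Complex.log (1 - x * q ^ n)) := by
      have hlim : Tendsto (fun n : ℕ => ‖x‖ * ‖q‖ ^ n) atTop (𝓝 0) := by
        have h := tendsto_pow_atTop_nhds_zero_of_norm_lt_one
          (show ‖‖q‖‖ < 1 by
            rwa [Real.norm_eq_abs, _root_.abs_of_nonneg (norm_nonneg q)])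
        simpa using h.const_mul (‖x‖)
      apply Summable.of_norm_bounded_eventually_nat
        (g := fun n => 3/2 * (‖x‖ * ‖q‖ ^ n))
      · exact (((summable_geometric_of_lt_one (norm_nonneg q) hq).mul_left
          (‖x‖)).mul_left (3/2))
      · filter_upwards [hlim.eventually_le_const (show (0:ℝ) < 1/2 by norm_num)] with n hn
        have hnorm : ‖-(x * q ^ n)‖ = ‖x‖ * ‖q‖ ^ n := by
          rw [norm_neg, norm_mul, norm_pow]
        have h1 : ‖Complex.log (1 + -(x * q ^ n))‖ ≤ 3/2 * ‖-(x * q ^ n)‖ :=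
          Complex.norm_log_one_add_half_le_self (by rw [hnorm]; exact hn)
        rw [hnorm] at h1
        simpa [sub_eq_add_neg] using h1
    exact Complex.multipliable_of_summable_log hlog
  · push_neg at hzero
    obtain ⟨m, hm⟩ := hzero
    refine ⟨0, ?_⟩
    show Tendsto (fun s : Finset ℕ => ∏ b ∈ s, (1 - x * q ^ b)) atTop (𝓝 0)
    apply Tendsto.congr' ?_ (tendsto_const_nhds (x := (0:ℂ)))
    filter_upwards [eventually_ge_atTop ({m} : Finset ℕ)] with s hs
    exact (Finset.prod_eq_zero (hs (Finset.mem_singleton_self m)) hm).symm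

/-- Euler's identity `(x;q)_∞ = ∑_{n≥0} (-1)^n q^{n(n-1)/2} x^n / (q;q)_n` for `|q| < 1`,
with the series converging absolutely. -/
theorem stmt13 (q x : ℂ) (hq : ‖q‖ < 1) :
    Summable (fun n : ℕ =>
      ‖(-1) ^ n * q ^ (n * (n - 1) / 2) * x ^ n /
        ∏ k ∈ Finset.range n, (1 - q ^ (k + 1))‖) ∧
    (∏' n : ℕ, (1 - x * q ^ n)) =
      ∑' n : ℕ, (-1) ^ n * q ^ (n * (n - 1) / 2) * x ^ n /
        ∏ k ∈ Finset.range n, (1 - q ^ (k + 1)) := by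
  have hbsum := eulerB_summable q x hq
  have hGb : ∀ n, ‖eulerG q x n‖ ≤ eulerB q x n := by
    intro n
    have h := eulerB_bound q x hq 1 n (by rw [norm_one]; exact one_le_pow₀ one_le_two)
    rw [mul_one] at h
    exact h
  constructor
  · have h1 : Summable (fun n => ‖eulerG q x n‖) :=
      hbsum.of_nonneg_of_le (fun n => norm_nonneg _) hGb
    have h2 : (fun n : ℕ => ‖(-1) ^ n * q ^ (n * (n - 1) / 2) * x ^ n /
        ∏ k ∈ Finset.range n, (1 - q ^ (k + 1))‖) = fun n => ‖eulerG q x n‖ := by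
      funext n
      rfl
    rw [h2]
    exact h1
  · have hFsum : ∀ N, (∑' n, eulerF q x N n) = ∏ k ∈ Finset.range N, (1 - x * q ^ k) := by
      intro N
      rw [tsum_eq_sum (s := Finset.range (N+1))
        (fun b hb => by rw [eulerF, if_neg (by simp at hb; omega)]), euler_qbinom q x hq N]
      apply Finset.sum_congr rfl
      intro n hn
      rw [eulerF, if_pos (by simp at hn; omega)]
    have hab : ∀ k, Tendsto (fun N => eulerF q x N k) atTop (𝓝 (eulerG q x k)) := by
      intro k
      have hTk : Tendsto (fun N => eulerT q N k) atTop (𝓝 1) := by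
        have h := tendsto_finset_prod (f := fun (j : ℕ) (N : ℕ) => 1 - q ^ (N - j))
          (x := atTop) (a := fun _ => (1:ℂ)) (Finset.range k) ?_
        · simpa [eulerT] using h
        · intro j _
          have hq0 : Tendsto (fun N : ℕ => q ^ (N - j)) atTop (𝓝 0) :=
            (tendsto_pow_atTop_nhds_zero_of_norm_lt_one
              (by exact hq)).comp (tendsto_sub_atTop_nat j)
          simpa using tendsto_const_nhds.sub hq0
      have h2 : Tendsto (fun N => eulerC q k * x ^ k * eulerT q N k / eulerD q k) atTop
          (𝓝 (eulerC q k * x ^ k * 1 / eulerD q k)) := (hTk.const_mul _).div_const _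
      rw [show eulerC q k * x ^ k * 1 / eulerD q k = eulerG q x k by rw [mul_one]; rfl] at h2
      apply Tendsto.congr' ?_ h2
      filter_upwards [eventually_ge_atTop k] with N hN
      rw [eulerF, if_pos hN]
    have hbound : ∀ᶠ N in (atTop : Filter ℕ), ∀ n, ‖eulerF q x N n‖ ≤ eulerB q x n := by
      apply Eventually.of_forall
      intro N n
      rw [eulerF]
      split
      · exact eulerB_bound q x hq _ n (eulerT_norm q hq N n)
      · simpa using eulerB_nonneg q x hq n
    have hTend1 : Tendsto (fun N => ∑' n, eulerF q x N n) atTop (𝓝 (∑' n, eulerG q x n)) :=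
      tendsto_tsum_of_dominated_convergence hbsum hab hbound
    have hTend1' : Tendsto (fun N => ∏ k ∈ Finset.range N, (1 - x * q ^ k)) atTop
        (𝓝 (∑' n, eulerG q x n)) := hTend1.congr hFsum
    have hTend2 : Tendsto (fun N => ∏ k ∈ Finset.range N, (1 - x * q ^ k)) atTop
        (𝓝 (∏' k : ℕ, (1 - x * q ^ k))) :=
      (euler_multipliable q x hq).hasProd.tendsto_prod_nat
    have := tendsto_nhds_unique hTend2 hTend1'
    rw [this]
    rfl
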